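/- Let G = (V,E) be a tree (a connected acyclic undirected graph) on V = {1,…,N}. Then a configuration p = (a_1,…,a_N) is an equilibrium of the formation control system if and only if u_ij(p) = 0 for every edge (i,j) ∈ E. -/

import Mathlib

open Finset
open scoped RealInnerProductSpace Classical

/-- The decentralized control law `u_ij(p)`. -/
noncomputable def uCtrl {n N : ℕ} (b a : Fin N → EuclideanSpace ℝ (Fin n)) (i j : Fin N) : ℝ :=
  if a j = a i then 0 else ⟪b j - b i, a j - a i⟫ / ‖a j - a i‖ ^ 2 - 1

/-- The quadratic Lyapunov function `Φ(p) = ∑ ‖a i - b i‖²`. -/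
noncomputable def Phi {n N : ℕ} (b a : Fin N → EuclideanSpace ℝ (Fin n)) : ℝ :=
  ∑ i, ‖a i - b i‖ ^ 2

/-- Sum over each undirected edge of `G` exactly once. -/
noncomputable def edgeSum {N : ℕ} (G : SimpleGraph (Fin N)) (f : Fin N → Fin N → ℝ) : ℝ :=
  ∑ p ∈ Finset.univ.filter (fun p : Fin N × Fin N => p.1 < p.2 ∧ G.Adj p.1 p.2), f p.1 p.2

/-- `p = a` is an equilibrium of the formation control system:
`∑_{j ∈ V_i} u_ij (p) • (a i - a j) = 0` for every vertex `i`. -/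
noncomputable def IsEquilibrium {n N : ℕ} (G : SimpleGraph (Fin N))
    (b a : Fin N → EuclideanSpace ℝ (Fin n)) : Prop :=
  ∀ i, ∑ j ∈ Finset.univ.filter (fun j => G.Adj i j), uCtrl b a i j • (a i - a j) = 0

lemma uCtrl_symm {n N : ℕ} (b a : Fin N → EuclideanSpace ℝ (Fin n)) (i j : Fin N) :
    uCtrl b a i j = uCtrl b a j i := by
  unfold uCtrl
  by_cases h : a j = a i
  · simp [h]
  · rw [if_neg h, if_neg (fun h' => h h'.symm)]
    have h1 : (b i - b j : EuclideanSpace ℝ (Fin n)) = -(b j - b i) := by abel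
    have h2 : (a i - a j : EuclideanSpace ℝ (Fin n)) = -(a j - a i) := by abel
    rw [h1, h2, inner_neg_neg, norm_neg]

/-- If `G` is a tree, a configuration `p = a` is an equilibrium of the formation control system
iff `u_ij(p) = 0` for every edge `(i,j)` of `G`. -/
theorem tree_isEquilibrium_iff {n N : ℕ} (G : SimpleGraph (Fin N)) (hG : G.IsTree)
    (b a : Fin N → EuclideanSpace ℝ (Fin n)) :
    IsEquilibrium G b a ↔ ∀ i j, G.Adj i j → uCtrl b a i j = 0 := by
  constructor
  · intro heq i j hij
    by_cases hae : a j = a i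
    · simp [uCtrl, hae]
    have hb : G.IsBridge s(i, j) :=
      SimpleGraph.isAcyclic_iff_forall_edge_isBridge.mp hG.IsAcyclic (by simpa using hij)
    set G' := G \ SimpleGraph.fromEdgeSet {s(i, j)} with hG'
    have hjns : ¬ G'.Reachable i j := SimpleGraph.isBridge_iff.mp hb
    set S : Finset (Fin N) := univ.filter (fun v => G'.Reachable i v) with hS
    have hiS : i ∈ S := Finset.mem_filter.mpr ⟨Finset.mem_univ i, SimpleGraph.Reachable.refl i⟩
    have hjS : j ∉ S := by simpa [hS] using hjns
    have key : ∀ u v, G.Adj u v → u ∈ S → v ∉ S → u = i ∧ v = j := by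
      intro u v huv huS hvS
      by_cases he : s(u, v) = s(i, j)
      · rcases Sym2.eq_iff.mp he with ⟨rfl, rfl⟩ | ⟨rfl, rfl⟩
        · exact ⟨rfl, rfl⟩
        · exact absurd hiS hvS
      · exfalso
        have hadj : G'.Adj u v := by
          rw [hG', SimpleGraph.sdiff_adj, SimpleGraph.fromEdgeSet_adj]
          exact ⟨huv, by simp [he]⟩
        have huR : G'.Reachable i u := by simpa [hS] using huS
        refine hvS (Finset.mem_filter.mpr ⟨Finset.mem_univ v, ?_⟩)
        exact huR.trans hadj.reachable
    set f : Fin N → Fin N → EuclideanSpace ℝ (Fin n) :=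
      fun u v => uCtrl b a u v • (a u - a v) with hf
    have hanti : ∀ u v, f u v = - f v u := by
      intro u v
      simp only [hf]
      rw [uCtrl_symm, ← smul_neg, neg_sub]
    have h0 : ∑ u ∈ S, ∑ v ∈ univ.filter (fun v => G.Adj u v), f u v = 0 :=
      Finset.sum_eq_zero fun u _ => heq u
    have hsplit : ∀ u : Fin N, ∑ v ∈ univ.filter (fun v => G.Adj u v), f u v
        = (∑ v ∈ univ.filter (fun v => G.Adj u v ∧ v ∈ S), f u v)
        + ∑ v ∈ univ.filter (fun v => G.Adj u v ∧ v ∉ S), f u v := by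
      intro u
      rw [← Finset.sum_filter_add_sum_filter_not (univ.filter (fun v => G.Adj u v)) (· ∈ S),
        Finset.filter_filter, Finset.filter_filter]
    set g : Fin N → Fin N → EuclideanSpace ℝ (Fin n) :=
      fun u v => if u ∈ S ∧ (G.Adj u v ∧ v ∈ S) then f u v else 0 with hg
    have hganti : ∀ u v, g u v = - g v u := by
      intro u v
      by_cases hc : u ∈ S ∧ (G.Adj u v ∧ v ∈ S)
      · rw [hg]
        simp only [if_pos hc, if_pos (show v ∈ S ∧ (G.Adj v u ∧ u ∈ S) from
          ⟨hc.2.2, hc.2.1.symm, hc.1⟩)]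
        exact hanti u v
      · have hc' : ¬ (v ∈ S ∧ (G.Adj v u ∧ u ∈ S)) := fun h => hc ⟨h.2.2, h.2.1.symm, h.1⟩
        simp [hg, hc, hc']
    have hA : ∑ u ∈ S, ∑ v ∈ univ.filter (fun v => G.Adj u v ∧ v ∈ S), f u v = 0 := by
      have hrw : ∑ u ∈ S, ∑ v ∈ univ.filter (fun v => G.Adj u v ∧ v ∈ S), f u v
          = ∑ u : Fin N, ∑ v : Fin N, g u v := by
        have hSf : univ.filter (fun u : Fin N => u ∈ S) = S := by
          ext u; simp
        rw [← hSf, Finset.sum_filter]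
        refine Finset.sum_congr rfl fun u _ => ?_
        by_cases hu : u ∈ S
        · rw [if_pos hu, Finset.sum_filter]
          refine Finset.sum_congr rfl fun v _ => ?_
          simp [hg, hu]
        · rw [if_neg hu]
          symm
          refine Finset.sum_eq_zero fun v _ => ?_
          simp [hg, hu]
      set A := ∑ u : Fin N, ∑ v : Fin N, g u v with hAdef
      have hneg : A = -A := by
        calc A = ∑ v : Fin N, ∑ u : Fin N, g u v := Finset.sum_comm
          _ = ∑ u : Fin N, ∑ v : Fin N, g v u := rfl
          _ = ∑ u : Fin N, ∑ v : Fin N, -(g u v) := by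
              refine Finset.sum_congr rfl fun u _ => Finset.sum_congr rfl fun v _ => ?_
              rw [hganti v u]
          _ = -A := by rw [hAdef]; simp [Finset.sum_neg_distrib]
      have h2 : (2 : ℝ) • A = 0 := by
        rw [two_smul]
        nth_rewrite 2 [hneg]
        exact add_neg_cancel A
      rw [hrw]
      exact (smul_eq_zero.mp h2).resolve_left (by norm_num)
    have hB : ∑ u ∈ S, ∑ v ∈ univ.filter (fun v => G.Adj u v ∧ v ∉ S), f u v = f i j := by
      rw [Finset.sum_eq_single_of_mem i hiS]
      · have : univ.filter (fun v => G.Adj i v ∧ v ∉ S) = {j} := by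
          ext v
          simp only [mem_filter, mem_univ, true_and, mem_singleton]
          constructor
          · rintro ⟨hav, hvS⟩
            exact (key i v hav hiS hvS).2
          · rintro rfl
            exact ⟨hij, hjS⟩
        rw [this, Finset.sum_singleton]
      · intro u huS hui
        refine Finset.sum_eq_zero fun v hv => ?_
        rw [mem_filter] at hv
        exact absurd (key u v hv.2.1 huS hv.2.2).1 hui
    have hfij : f i j = 0 := by
      have := h0
      rw [Finset.sum_congr rfl (fun u _ => hsplit u), Finset.sum_add_distrib, hA, hB,
        zero_add] at this
      exact this
    have hsub : a i - a j ≠ 0 := sub_ne_zero.mpr fun h => hae h.symm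
    rcases smul_eq_zero.mp hfij with h | h
    · exact h
    · exact absurd h hsub
  · intro h i
    refine Finset.sum_eq_zero fun j hj => ?_
    rw [mem_filter] at hj
    rw [h i j hj.2, zero_smul]
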